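/- Let K be a field, G a finite group, and C a nonzero right ideal of KG. Then 2\sqrt{|G|} \leq d(C) + dim_K(C) \leq |G| + 1. -/

import Mathlib

open MonoidAlgebra

attribute [local instance] Classical.propDecidable

/-- Coefficientwise (Schur) product on the group algebra. -/
noncomputable def schur {K G : Type*} [Semiring K] (f g : MonoidAlgebra K G) :
    MonoidAlgebra K G :=
  .ofCoeff (Finsupp.zipWith (· * ·) (mul_zero 0) f.coeff g.coeff)

/-- `C` is a right ideal of the group algebra. -/
def IsRightIdeal {K G : Type*} [Field K] [Group G]
    (C : Submodule K (MonoidAlgebra K G)) : Prop :=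
  ∀ c ∈ C, ∀ v : MonoidAlgebra K G, c * v ∈ C

lemma support_span_subset {K G : Type*} [Field K] (B : Finset (MonoidAlgebra K G))
    {v : MonoidAlgebra K G} (hv : v ∈ Submodule.span K (B : Set (MonoidAlgebra K G))) :
    v.coeff.support ⊆ B.biUnion (fun f => f.coeff.support) := by
  classical
  induction hv using Submodule.span_induction with
  | mem x hx => exact Finset.subset_biUnion_of_mem (fun f : MonoidAlgebra K G => f.coeff.support) hx
  | zero => simp
  | add x y _ _ hx hy => exact (Finsupp.support_add (g₁ := x.coeff) (g₂ := y.coeff)).trans (Finset.union_subset hx hy)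
  | smul a x _ hx => exact (Finsupp.support_smul (g := x.coeff) (b := a)).trans hx

/-- `2√|G| ≤ d(C) + dim C ≤ |G| + 1` for a nonzero right ideal `C` of `KG`. -/
theorem stmt3 {K G : Type*} [Field K] [Group G] [Fintype G]
    (C : Submodule K (MonoidAlgebra K G)) (hI : IsRightIdeal C) (hC : C ≠ ⊥)
    (d : ℕ) (hd : IsLeast {w | ∃ c ∈ C, c ≠ 0 ∧ c.coeff.support.card = w} d) :
    2 * Real.sqrt (Fintype.card G) ≤ (d : ℝ) + Module.finrank K ↥C ∧
      d + Module.finrank K ↥C ≤ Fintype.card G + 1 := by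
  classical
  haveI : Module.Finite K (MonoidAlgebra K G) :=
    Module.Finite.equiv (MonoidAlgebra.coeffLinearEquiv K).symm
  set n := Fintype.card G with hn
  set k := Module.finrank K ↥C with hk
  have e : MonoidAlgebra K G ≃ₗ[K] (G →₀ K) :=
    MonoidAlgebra.coeffLinearEquiv K
  have hfr : Module.finrank K (MonoidAlgebra K G) = n := by
    rw [e.finrank_eq, Module.finrank_finsupp_self]
  have hkn : k ≤ n := hfr ▸ Submodule.finrank_le C
  have hk1 : 1 ≤ k := by
    obtain ⟨x, hxC, hx0⟩ := (Submodule.ne_bot_iff C).mp hC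
    have : Nontrivial ↥C := ⟨⟨⟨x, hxC⟩, 0, fun h => hx0 (by simpa using congrArg Subtype.val h)⟩⟩
    exact Module.finrank_pos_iff.mpr this
  -- lower bound: n ≤ d * k
  obtain ⟨c, hcC, hc0, hcd⟩ := hd.1
  have hndk : n ≤ d * k := by
    set s : Finset (MonoidAlgebra K G) :=
      Finset.image (fun g : G => c * single g 1) Finset.univ with hs
    obtain ⟨b, hbs, hspan, hli⟩ := exists_linearIndependent K (s : Set (MonoidAlgebra K G))
    have hbfin : b.Finite := s.finite_toSet.subset hbs
    haveI : Fintype b := hbfin.fintype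
    set B : Finset (MonoidAlgebra K G) := b.toFinset with hB
    have hBb : (B : Set (MonoidAlgebra K G)) = b := Set.coe_toFinset b
    have hone : ∀ y : K, y * 1 = 0 ↔ y = 0 := fun y => by simp
    have hsuppmul : ∀ g : G, (c * single g 1).coeff.support = c.coeff.support.map (mulRightEmbedding g) :=
      fun g => MonoidAlgebra.support_coeff_mul_single c 1 hone g
    -- covering
    have hcover : (Finset.univ : Finset G) ⊆ B.biUnion (fun f => f.coeff.support) := by
      intro x _
      obtain ⟨s₀, hs₀⟩ := Finsupp.support_nonempty_iff.mpr (mt MonoidAlgebra.coeff_eq_zero.mp hc0)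
      have hmem : c * single (s₀⁻¹ * x) 1 ∈ Submodule.span K (B : Set (MonoidAlgebra K G)) := by
        rw [hBb, hspan]
        exact Submodule.subset_span (by simp [hs])
      have hxsupp : x ∈ (c * single (s₀⁻¹ * x) 1).coeff.support := by
        rw [hsuppmul]
        refine Finset.mem_map.mpr ⟨s₀, hs₀, ?_⟩
        simp [mulRightEmbedding, mul_assoc]
      exact support_span_subset B hmem hxsupp
    have hcardB : B.card ≤ k := by
      have hspanle : Submodule.span K b ≤ C := by
        rw [hspan]
        refine Submodule.span_le.mpr ?_
        intro f hf
        simp only [hs, Finset.coe_image, Set.mem_image] at hf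
        obtain ⟨g, -, rfl⟩ := hf
        exact hI c hcC _
      calc B.card = Module.finrank K (Submodule.span K b) :=
            (finrank_span_set_eq_card hli).symm
        _ ≤ k := Submodule.finrank_mono hspanle
    calc n = (Finset.univ : Finset G).card := (Finset.card_univ).symm
      _ ≤ (B.biUnion (fun f => f.coeff.support)).card := Finset.card_le_card hcover
      _ ≤ ∑ f ∈ B, f.coeff.support.card := Finset.card_biUnion_le
      _ ≤ ∑ _f ∈ B, d := by
          refine Finset.sum_le_sum ?_
          intro f hf
          have hfs : f ∈ s := hbs (hBb ▸ Finset.mem_coe.mpr hf)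
          simp only [hs, Finset.mem_image] at hfs
          obtain ⟨g, -, rfl⟩ := hfs
          rw [hsuppmul g, Finset.card_map, hcd]
      _ = B.card * d := by rw [Finset.sum_const, smul_eq_mul]
      _ ≤ k * d := Nat.mul_le_mul_right d hcardB
      _ = d * k := Nat.mul_comm k d
  constructor
  · -- AM-GM
    have h1 : (n : ℝ) ≤ (d : ℝ) * k := by exact_mod_cast hndk
    have h2 : Real.sqrt n ≤ Real.sqrt d * Real.sqrt k := by
      rw [← Real.sqrt_mul (by positivity)]
      exact Real.sqrt_le_sqrt h1
    nlinarith [sq_nonneg (Real.sqrt d - Real.sqrt k),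
      Real.sq_sqrt (show (0:ℝ) ≤ d by positivity),
      Real.sq_sqrt (show (0:ℝ) ≤ k by positivity),
      Real.sqrt_nonneg (n : ℝ)]
  · -- Singleton bound
    obtain ⟨S, hSsub, hScard⟩ := Finset.exists_subset_card_eq (s := (Finset.univ : Finset G)) (n := k - 1)
      (by simpa using (Nat.sub_le k 1).trans hkn)
    let π : ↥C →ₗ[K] (S → K) :=
      LinearMap.pi fun s => (Finsupp.lapply (s : G)).comp ((MonoidAlgebra.coeffLinearEquiv K).toLinearMap.comp C.subtype)
    have hker : LinearMap.ker π ≠ ⊥ := by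
      intro h
      have hinj : Function.Injective π := LinearMap.ker_eq_bot.mp h
      have hle := LinearMap.finrank_le_finrank_of_injective hinj
      rw [Module.finrank_pi, Fintype.card_coe, hScard] at hle
      omega
    obtain ⟨x, hxker, hx0⟩ := (Submodule.ne_bot_iff _).mp hker
    have hx0' : (x : MonoidAlgebra K G) ≠ 0 := fun h => hx0 (Subtype.ext h)
    have hsupp : (x : MonoidAlgebra K G).coeff.support ⊆ Finset.univ \ S := by
      intro t ht
      rw [Finset.mem_sdiff]
      refine ⟨Finset.mem_univ t, fun htS => ?_⟩
      have h0 : π x ⟨t, htS⟩ = 0 := by rw [LinearMap.mem_ker.mp hxker]; rfl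
      exact Finsupp.mem_support_iff.mp ht h0
    have hcard : (x : MonoidAlgebra K G).coeff.support.card ≤ n - (k - 1) := by
      calc (x : MonoidAlgebra K G).coeff.support.card ≤ (Finset.univ \ S).card :=
            Finset.card_le_card hsupp
        _ = n - (k - 1) := by rw [Finset.card_sdiff_of_subset hSsub, Finset.card_univ, hScard]
    have hdle : d ≤ n - (k - 1) :=
      le_trans (hd.2 ⟨(x : MonoidAlgebra K G), x.2, hx0', rfl⟩) hcard
    omega
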